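/- Let (p, Q) be one of (269, 268), (401, 400), (419, 418), (499, 166), (587, 293). Then for every integer n ≥ 1: if n ≡ c (mod Q) for some c ∈ {0, −1, −4, −17}, then ν_p(T(n)) = ν_p(n − c) + 1; if 3n ≡ 1 (mod Q), then ν_p(T(n)) = ν_p(3n − 1) + 1; if 3n ≡ −5 (mod Q), then ν_p(T(n)) = ν_p(3n + 5) + 1; and in all remaining cases ν_p(T(n)) = 0. (The six residue classes involved are pairwise distinct modulo Q; since gcd(3, Q) = 1, the congruences 3n ≡ 1 and 3n ≡ −5 (mod Q) express n ≡ 1/3 and n ≡ −5/3 (mod Q), and since p ≠ 3 one has ν_p(n − 1/3) = ν_p(3n − 1) and ν_p(n + 5/3) = ν_p(3n + 5).) -/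

import Mathlib

structure R3 where
  a : ℤ
  b : ℤ
  c : ℤ
deriving DecidableEq

namespace R3

@[ext] theorem ext' {x y : R3} (ha : x.a = y.a) (hb : x.b = y.b) (hc : x.c = y.c) : x = y := by
  cases x; cases y; simp_all

instance : Zero R3 := ⟨⟨0,0,0⟩⟩
instance : One R3 := ⟨⟨1,0,0⟩⟩
instance : Add R3 := ⟨fun x y => ⟨x.a+y.a, x.b+y.b, x.c+y.c⟩⟩
instance : Neg R3 := ⟨fun x => ⟨-x.a, -x.b, -x.c⟩⟩
instance : NatCast R3 := ⟨fun n => ⟨(n:ℤ),0,0⟩⟩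
instance : IntCast R3 := ⟨fun n => ⟨n,0,0⟩⟩
instance : Mul R3 := ⟨fun x y =>
  ⟨x.a*y.a + x.b*y.c + x.c*y.b + x.c*y.c,
   x.a*y.b + x.b*y.a + x.b*y.c + x.c*y.b + 2*(x.c*y.c),
   x.a*y.c + x.b*y.b + x.c*y.a + x.b*y.c + x.c*y.b + 2*(x.c*y.c)⟩⟩

@[simp] theorem ncast_a (n : ℕ) : ((n:R3)).a = (n:ℤ) := rfl
@[simp] theorem ncast_b (n : ℕ) : ((n:R3)).b = 0 := rfl
@[simp] theorem ncast_c (n : ℕ) : ((n:R3)).c = 0 := rfl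
@[simp] theorem icast_a (n : ℤ) : ((n:R3)).a = n := rfl
@[simp] theorem icast_b (n : ℤ) : ((n:R3)).b = 0 := rfl
@[simp] theorem icast_c (n : ℤ) : ((n:R3)).c = 0 := rfl
@[simp] theorem zero_a : (0:R3).a = 0 := rfl
@[simp] theorem zero_b : (0:R3).b = 0 := rfl
@[simp] theorem zero_c : (0:R3).c = 0 := rfl
@[simp] theorem one_a : (1:R3).a = 1 := rfl
@[simp] theorem one_b : (1:R3).b = 0 := rfl
@[simp] theorem one_c : (1:R3).c = 0 := rfl
@[simp] theorem add_a (x y : R3) : (x+y).a = x.a+y.a := rfl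
@[simp] theorem add_b (x y : R3) : (x+y).b = x.b+y.b := rfl
@[simp] theorem add_c (x y : R3) : (x+y).c = x.c+y.c := rfl
@[simp] theorem neg_a (x : R3) : (-x).a = -x.a := rfl
@[simp] theorem neg_b (x : R3) : (-x).b = -x.b := rfl
@[simp] theorem neg_c (x : R3) : (-x).c = -x.c := rfl
@[simp] theorem mul_a (x y : R3) : (x*y).a = x.a*y.a + x.b*y.c + x.c*y.b + x.c*y.c := rfl
@[simp] theorem mul_b (x y : R3) : (x*y).b = x.a*y.b + x.b*y.a + x.b*y.c + x.c*y.b + 2*(x.c*y.c) := rfl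
@[simp] theorem mul_c (x y : R3) : (x*y).c = x.a*y.c + x.b*y.b + x.c*y.a + x.b*y.c + x.c*y.b + 2*(x.c*y.c) := rfl

instance : CommRing R3 where
  add_assoc := by intros; apply ext' <;> simp <;> ring
  zero_add := by intros; apply ext' <;> simp
  add_zero := by intros; apply ext' <;> simp
  add_comm := by intros; apply ext' <;> simp <;> ring
  mul_assoc := by intros; apply ext' <;> simp <;> ring
  one_mul := by intros; apply ext' <;> simp
  mul_one := by intros; apply ext' <;> simp
  left_distrib := by intros; apply ext' <;> simp <;> ring
  right_distrib := by intros; apply ext' <;> simp <;> ring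
  mul_comm := by intros; apply ext' <;> simp <;> ring
  zero_mul := by intros; apply ext' <;> simp
  mul_zero := by intros; apply ext' <;> simp
  neg_add_cancel := by intros; apply ext' <;> simp
  nsmul := nsmulRec
  zsmul := zsmulRec
  natCast := Nat.cast
  natCast_zero := by apply ext' <;> simp
  natCast_succ := by intro n; apply ext' <;> simp
  intCast := Int.cast
  intCast_ofNat := by intro n; apply ext' <;> simp
  intCast_negSucc := by intro n; apply ext' <;> simp [Int.negSucc_eq] <;> push_cast <;> ring

@[simp] theorem sub_a (x y : R3) : (x-y).a = x.a-y.a := by rw [sub_eq_add_neg, add_a, neg_a, ← sub_eq_add_neg]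
@[simp] theorem sub_b (x y : R3) : (x-y).b = x.b-y.b := by rw [sub_eq_add_neg, add_b, neg_b, ← sub_eq_add_neg]
@[simp] theorem sub_c (x y : R3) : (x-y).c = x.c-y.c := by rw [sub_eq_add_neg, add_c, neg_c, ← sub_eq_add_neg]

theorem icast (t : ℤ) : (t : R3) = ⟨t,0,0⟩ := rfl

def al : R3 := ⟨0,1,0⟩
def ai : R3 := ⟨-1,-1,1⟩

theorem al_mul_ai : al * ai = 1 := by decide

theorem test1 : (al^3 = al^2 + al + 1) := by decide



def bpow : ℕ → R3 → ℕ → R3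
  | 0, _, _ => 1
  | f+1, x, n =>
    if n = 0 then 1
    else (if n % 2 = 1 then x else 1) * bpow f (x*x) (n/2)

theorem bpow_eq : ∀ f (x : R3) n, n < 2^f → bpow f x n = x^n := by
  intro f
  induction f with
  | zero => intro x n h; interval_cases n; rfl
  | succ f ih =>
    intro x n h
    rw [bpow]
    by_cases h0 : n = 0
    · simp [h0]
    · have h2f : 2^(f+1) = 2*2^f := by rw [pow_succ]; ring
      have h2 : n / 2 < 2 ^ f := by omega
      rw [if_neg h0, ih _ _ h2]
      have hxx : (x*x) = x^2 := by ring
      have key : (x*x)^(n/2) = x^(2*(n/2)) := by rw [hxx, ← pow_mul]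
      rcases Nat.mod_two_eq_zero_or_one n with hm | hm
      · rw [hm]; simp only [if_neg (by omega : ¬ (0:ℕ) = 1), one_mul, key]
        congr 1; omega
      · rw [hm, if_pos rfl, key, ← pow_succ']
        congr 1; omega

set_option maxRecDepth 4000 in
theorem testdvd2 : (269:ℤ) ∣ ((bpow 16 al 268).a - 1) ∧ (269:ℤ) ∣ (bpow 16 al 268).b ∧ (269:ℤ) ∣ (bpow 16 al 268).c := by decide

end R3
namespace R3

def L (x : R3) : ℤ := x.b + x.c

theorem L_add (x y : R3) : L (x + y) = L x + L y := by simp [L]; ring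
theorem L_one : L 1 = 0 := rfl
theorem L_sub (x y : R3) : L (x - y) = L x - L y := by simp [L]; ring

theorem cdvd_iff (t : ℤ) (x : R3) : (t:R3) ∣ x ↔ (t ∣ x.a ∧ t ∣ x.b ∧ t ∣ x.c) := by
  constructor
  · rintro ⟨z, rfl⟩
    refine ⟨⟨z.a, by simp⟩, ⟨z.b, by simp⟩, ⟨z.c, by simp⟩⟩
  · rintro ⟨⟨u,hu⟩,⟨v,hv⟩,⟨w,hw⟩⟩
    exact ⟨⟨u,v,w⟩, by apply ext' <;> simp [hu,hv,hw]⟩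

theorem dvd_L {t : ℤ} {x : R3} (h : (t:R3) ∣ x) : t ∣ L x := by
  rw [cdvd_iff] at h
  exact dvd_add h.2.1 h.2.2

def uu : R3ˣ := ⟨al, ai, al_mul_ai, by rw [mul_comm]; exact al_mul_ai⟩

theorem uu_val : (uu : R3) = al := rfl
theorem uu_inv_val : ((uu⁻¹ : R3ˣ) : R3) = ai := rfl

theorem uu_pow_nat (m : ℕ) : ((uu ^ (m:ℤ) : R3ˣ) : R3) = al ^ m := by
  rw [zpow_natCast, Units.val_pow_eq_pow_val, uu_val]

def Tz (n : ℤ) : ℤ := L ((uu ^ n : R3ˣ) : R3)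

theorem uu_shift (j : ℤ) (k : ℕ) : ((uu ^ (j + (k:ℤ)) : R3ˣ) : R3) = ((uu^j : R3ˣ) : R3) * al ^ k := by
  rw [zpow_add, Units.val_mul, uu_pow_nat]

theorem Tz_rec (j : ℤ) : Tz (j + 3) = Tz (j + 2) + Tz (j + 1) + Tz j := by
  unfold Tz
  have h3 : (j:ℤ) + 3 = j + ((3:ℕ):ℤ) := by norm_num
  have h2 : (j:ℤ) + 2 = j + ((2:ℕ):ℤ) := by norm_num
  have h1 : (j:ℤ) + 1 = j + ((1:ℕ):ℤ) := by norm_num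
  rw [h3, h2, h1, uu_shift, uu_shift, uu_shift]
  have hal : al^3 = al^2 + al^1 + 1 := by decide
  rw [hal, mul_add, mul_add, L_add, L_add, mul_one]

theorem T_eq_Tz (T : ℤ → ℤ)
    (hT0 : T 0 = 0) (hT1 : T 1 = 1) (hT2 : T 2 = 1)
    (hTrec : ∀ n : ℤ, T (n + 3) = T (n + 2) + T (n + 1) + T n) :
    ∀ n : ℤ, T n = Tz n := by
  have key : ∀ n : ℤ, T n = Tz n ∧ T (n+1) = Tz (n+1) ∧ T (n+2) = Tz (n+2) := by
    intro n
    induction n using Int.induction_on with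
    | zero =>
      refine ⟨?_, ?_, ?_⟩ <;> simp only [zero_add, hT0, hT1, hT2]
      · show (0:ℤ) = Tz 0; unfold Tz; rw [zpow_zero]; rfl
      · show (1:ℤ) = Tz 1; unfold Tz; rw [show (1:ℤ) = ((1:ℕ):ℤ) by norm_num, uu_pow_nat]; decide
      · show (1:ℤ) = Tz 2; unfold Tz; rw [show (2:ℤ) = ((2:ℕ):ℤ) by norm_num, uu_pow_nat]; decide
    | succ i ih =>
      obtain ⟨e0, e1, e2⟩ := ih
      refine ⟨by rw [show ((i:ℤ)+1) = i+1 by ring]; exact e1, by rw [show ((i:ℤ)+1+1) = i+2 by ring]; exact e2, ?_⟩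
      have ht := hTrec i
      have hz := Tz_rec i
      rw [show ((i:ℤ)+1+2) = i+3 by ring]
      omega
    | pred i ih =>
      obtain ⟨e0, e1, e2⟩ := ih
      refine ⟨?_, by rw [show (-(i:ℤ)-1+1) = -i by ring]; exact e0, by rw [show (-(i:ℤ)-1+2) = -i+1 by ring]; exact e1⟩
      have ht := hTrec (-(i:ℤ)-1)
      have hz := Tz_rec (-(i:ℤ)-1)
      rw [show (-(i:ℤ)-1+3) = -i+2 by ring, show (-(i:ℤ)-1+2) = -i+1 by ring, show (-(i:ℤ)-1+1) = -i by ring] at ht hz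
      omega
  exact fun n => (key n).1

end R3

section PV

theorem pv_eq {p : ℕ} (hp : p.Prime) {x : ℤ} {k : ℕ} (h1 : (p:ℤ)^k ∣ x) (h2 : ¬ (p:ℤ)^(k+1) ∣ x) :
    padicValInt p x = k := by
  haveI : Fact p.Prime := ⟨hp⟩
  have hx : x ≠ 0 := by rintro rfl; exact h2 (dvd_zero _)
  have hxn : x.natAbs ≠ 0 := Int.natAbs_ne_zero.mpr hx
  have h1' : p^k ∣ x.natAbs := Int.natCast_dvd.mp (by exact_mod_cast h1)
  have h2' : ¬ p^(k+1) ∣ x.natAbs := fun h => h2 (by exact_mod_cast Int.natCast_dvd.mpr h)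
  unfold padicValInt
  have hle : k ≤ padicValNat p x.natAbs := (padicValNat_dvd_iff_le hxn).mp h1'
  have hge : ¬ (k+1 ≤ padicValNat p x.natAbs) := fun h => h2' ((padicValNat_dvd_iff_le hxn).mpr h)
  omega

theorem pv_spec {p : ℕ} (hp : p.Prime) {x : ℤ} (hx : x ≠ 0) :
    (p:ℤ)^(padicValInt p x) ∣ x ∧ ¬ (p:ℤ)^(padicValInt p x + 1) ∣ x := by
  haveI : Fact p.Prime := ⟨hp⟩
  have hxn : x.natAbs ≠ 0 := Int.natAbs_ne_zero.mpr hx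
  unfold padicValInt
  constructor
  · have h : p^(padicValNat p x.natAbs) ∣ x.natAbs := (padicValNat_dvd_iff_le hxn).mpr le_rfl
    exact_mod_cast Int.natCast_dvd.mpr h
  · intro h
    have h' : p^(padicValNat p x.natAbs + 1) ∣ x.natAbs := Int.natCast_dvd.mp (by exact_mod_cast h)
    have := (padicValNat_dvd_iff_le hxn).mp h'
    omega

end PV
section Hensel

theorem int_prime {p : ℕ} (hp : p.Prime) : Prime (p:ℤ) := by
  rw [Int.prime_iff_natAbs_prime]; simpa using hp

theorem hensel {p : ℕ} (hp : p.Prime) (hp5 : 5 ≤ p) {x₁ : ℤ} (h1 : (p:ℤ)^2 ∣ 2*x₁^3 - 1) :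
    ∀ K : ℕ, 2 ≤ K → ∃ x : ℤ, (p:ℤ)^K ∣ 2*x^3 - 1 ∧ (p:ℤ)^2 ∣ (x - x₁) := by
  have hpI : Prime (p:ℤ) := int_prime hp
  intro K hK
  induction K with
  | zero => omega
  | succ K ih =>
    rcases Nat.lt_or_ge K 2 with h | h
    · -- K = 1, K+1 = 2
      have : K = 1 := by omega
      subst this
      exact ⟨x₁, h1, by simp⟩
    · obtain ⟨x, hx, hxx⟩ := ih h
      obtain ⟨j, rfl⟩ : ∃ j, K = j + 2 := ⟨K - 2, by omega⟩
      have hpx : ¬ (p:ℤ) ∣ (6*x^2) := by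
        intro hdvd
        have hp6 : ¬ (p:ℤ) ∣ 6 := by
          intro h6
          have h6' : p ∣ 6 := Int.natCast_dvd_natCast.mp (by exact_mod_cast h6)
          have hle := Nat.le_of_dvd (by norm_num) h6'
          have : p = 5 ∨ p = 6 := by omega
          rcases this with h' | h' <;> subst h'
          · norm_num at h6'
          · norm_num at hp
        have hpxx : (p:ℤ) ∣ x := by
          rcases hpI.dvd_mul.mp hdvd with h' | h'
          · exact absurd h' hp6
          · exact hpI.dvd_of_dvd_pow h'
        have h2x : (p:ℤ) ∣ 2*x^3 := Dvd.dvd.mul_left (dvd_pow hpxx (by norm_num)) 2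
        have hpp : (p:ℤ) ∣ 2*x^3 - 1 := dvd_trans (dvd_pow_self _ (by omega : j+2 ≠ 0)) hx
        have : (p:ℤ) ∣ 1 := (dvd_sub_right h2x).mp (by simpa using hpp)
        have := Int.le_of_dvd (by norm_num) this
        omega
      obtain ⟨a, b, hab⟩ := (hpI.coprime_iff_not_dvd.mpr hpx)
      obtain ⟨t, ht⟩ := hx
      set s : ℤ := -t*b with hs
      have key : t + 6*x^2*s = (p:ℤ) * (t*a) := by
        rw [hs]; linear_combination (-t) * hab
      refine ⟨x + s*(p:ℤ)^(j+2), ?_, ?_⟩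
      · refine ⟨t*a + (p:ℤ)^(j+1)*(6*x*s^2 + 2*s^3*(p:ℤ)^(j+2)), ?_⟩
        linear_combination ht + (p:ℤ)^(j+2) * key + (6*x*s^2 + 2*s^3*(p:ℤ)^(j+2)) * (by ring : ((p:ℤ)^(j+2))^2 = (p:ℤ)^(j+3) * (p:ℤ)^(j+1))
      · have hre : x + s*(p:ℤ)^(j+2) - x₁ = (x - x₁) + (p:ℤ)^2*(s*(p:ℤ)^j) := by ring
        rw [hre]; exact dvd_add hxx ⟨s*(p:ℤ)^j, rfl⟩

end Hensel
section EXP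

theorem vlt {p j : ℕ} (hp : p.Prime) (hp5 : 5 ≤ p) (h2 : 2 ≤ j) : padicValNat p j + 2 ≤ j := by
  haveI : Fact p.Prime := ⟨hp⟩
  set v := padicValNat p j with hv
  rcases Nat.eq_zero_or_pos v with h0 | h1
  · omega
  · have hd : p^v ∣ j := pow_padicValNat_dvd
    have hle : p^v ≤ j := Nat.le_of_dvd (by omega) hd
    have h5v : 5^v ≤ p^v := Nat.pow_le_pow_left hp5 v
    have hlt : v - 1 < 5^(v-1) := Nat.lt_pow_self (by norm_num)
    have h5 : 5^v = 5 * 5^(v-1) := by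
      conv_lhs => rw [show v = (v-1)+1 by omega]
      rw [pow_succ]; ring
    omega

theorem choose_term_dvd {p : ℕ} (hp : p.Prime) (hp5 : 5 ≤ p) {m k j : ℕ} (hm : 1 ≤ m)
    (hk : p^k ∣ m) (h2 : 2 ≤ j) (hjm : j ≤ m) : p^(k+2) ∣ m.choose j * p^j := by
  haveI : Fact p.Prime := ⟨hp⟩
  have hC0 : m.choose j ≠ 0 := Nat.ne_zero_of_lt (Nat.choose_pos hjm)
  have hid : m * (m-1).choose (j-1) = m.choose j * j := by
    have h := Nat.add_one_mul_choose_eq (m-1) (j-1)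
    have e1 : m-1+1 = m := by omega
    have e2 : j-1+1 = j := by omega
    rw [e1, e2] at h
    exact h
  have hdvd : p^k ∣ j * m.choose j := by
    have : p^k ∣ m * (m-1).choose (j-1) := hk.mul_right _
    rw [hid] at this
    rwa [mul_comm]
  have hne : j * m.choose j ≠ 0 := by positivity
  have hk' : k ≤ padicValNat p (j * m.choose j) := (padicValNat_dvd_iff_le hne).mp hdvd
  rw [padicValNat.mul (by omega) hC0] at hk'
  have hvj : padicValNat p j + 2 ≤ j := vlt hp hp5 h2
  have hstep : p^(k+2) ∣ p^(padicValNat p (m.choose j) + j) := pow_dvd_pow p (by omega)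
  refine hstep.trans ?_
  rw [pow_add]
  exact Nat.mul_dvd_mul pow_padicValNat_dvd dvd_rfl

theorem EXP {p : ℕ} (hp : p.Prime) (hp5 : 5 ≤ p) (g ν : R3) (m k : ℕ) (hm : 1 ≤ m)
    (hk : p^k ∣ m) :
    ∃ e : R3, g * (1 + (p:R3)*ν)^m = g + (m:R3)*(p:R3)*(g*ν) + (p:R3)^(k+2) * e := by
  have hchoose : ∀ j ∈ Finset.Ico 2 (m+1),
      (p:R3)^(k+2) ∣ ((p:R3)*ν)^j * (1:R3)^(m-j) * (m.choose j : R3) := by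
    intro j hj
    rw [Finset.mem_Ico] at hj
    have hnat : p^(k+2) ∣ m.choose j * p^j := choose_term_dvd hp hp5 hm hk hj.1 (by omega)
    have hcast : ((p:R3))^(k+2) ∣ ((m.choose j * p^j : ℕ) : R3) := by
      have := Nat.cast_dvd_cast (α := R3) hnat
      rwa [Nat.cast_pow] at this
    refine hcast.trans ⟨ν^j * (1:R3)^(m-j), ?_⟩
    push_cast
    ring
  have htail := Finset.dvd_sum hchoose
  obtain ⟨E, hE⟩ := htail
  refine ⟨g * E, ?_⟩
  have hsplit : Finset.range (m+1) = insert 0 (insert 1 (Finset.Ico 2 (m+1))) := by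
    ext r
    simp only [Finset.mem_range, Finset.mem_insert, Finset.mem_Ico]
    omega
  have h01 : (0:ℕ) ∉ insert 1 (Finset.Ico 2 (m+1)) := by simp
  have h1i : (1:ℕ) ∉ Finset.Ico 2 (m+1) := by simp
  rw [add_comm (1:R3), add_pow, hsplit, Finset.sum_insert h01, Finset.sum_insert h1i, hE]
  simp only [pow_zero, pow_one, Nat.choose_zero_right, Nat.choose_one_right, Nat.cast_one,
    one_pow, mul_one, one_mul]
  ring

end EXP
namespace R3

theorem pcast (p : ℕ) : ((p:ℕ):R3) = (((p:ℕ):ℤ):R3) := by apply ext' <;> simp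

theorem ncast_eq (m : ℕ) : ((m:ℕ):R3) = (((m:ℕ):ℤ):R3) := by apply ext' <;> simp

theorem L_scal (t : ℤ) (x : R3) : L ((t:R3) * x) = t * L x := by
  simp [L, icast]; ring

theorem cube_id : (al^2 - al)^3 = ((2:ℤ):R3) * al := by decide

theorem assemble {p : ℕ} (hp : p.Prime) {TT w c mz : ℤ} {k : ℕ}
    (hT : TT = mz*(p:ℤ)*w + (p:ℤ)^(k+2)*c)
    (hm1 : (p:ℤ)^k ∣ mz) (hm2 : ¬ (p:ℤ)^(k+1) ∣ mz) (hw : ¬ (p:ℤ) ∣ w) :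
    padicValInt p TT = k + 1 := by
  have hp0 : (p:ℤ) ≠ 0 := Int.natCast_ne_zero.mpr hp.pos.ne'
  apply pv_eq hp
  · obtain ⟨mq, hmq⟩ := hm1
    exact ⟨mq*w + (p:ℤ)*c, by rw [hT, hmq]; ring⟩
  · intro hdvd
    have hd2 : (p:ℤ)^(k+2) ∣ mz*(p:ℤ)*w := by
      have : mz*(p:ℤ)*w = TT - (p:ℤ)^(k+2)*c := by rw [hT]; ring
      rw [this]
      exact dvd_sub hdvd ⟨c, rfl⟩
    obtain ⟨c2, hc2⟩ := hd2
    have hcan : mz*w = (p:ℤ)^(k+1)*c2 := by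
      apply mul_left_cancel₀ hp0
      linear_combination hc2
    have : (p:ℤ)^(k+1) ∣ mz*w := ⟨c2, hcan⟩
    have := (int_prime hp).pow_dvd_of_dvd_mul_right (k+1) hw this
    exact hm2 this

theorem coprime_factor {p Q : ℕ} (hp : p.Prime) (hpQ : ¬ (p:ℤ) ∣ (Q:ℤ)) {t mz : ℤ} {k : ℕ}
    (hfac : t = Q * mz) (h1 : (p:ℤ)^k ∣ t) (h2 : ¬(p:ℤ)^(k+1) ∣ t) :
    (p:ℤ)^k ∣ mz ∧ ¬ (p:ℤ)^(k+1) ∣ mz := by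
  constructor
  · exact (int_prime hp).pow_dvd_of_dvd_mul_left k hpQ (hfac ▸ h1)
  · intro h
    exact h2 (hfac ▸ (Dvd.dvd.mul_left h _))

/-- transfer int-pow dvd to nat m -/
theorem natdvd_of_int {p k m : ℕ} (h : (p:ℤ)^k ∣ (m:ℤ)) : p^k ∣ m := by exact_mod_cast h

theorem classA {p Q d : ℕ} (hp : p.Prime) (hp5 : 5 ≤ p) (hQpos : 0 < Q)
    (hpQ : ¬ (p:ℤ) ∣ (Q:ℤ))
    (hLd : L (ai ^ d) = 0)
    (hc1 : ((p:ℕ):R3) ∣ (al ^ Q - 1))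
    (hc2 : ¬ ((p:ℤ)^2 ∣ L (ai ^ d * (al ^ Q - 1)))) :
    ∀ n : ℤ, 1 ≤ n → (Q:ℤ) ∣ (n + d) → padicValInt p (Tz n) = padicValInt p (n + d) + 1 := by
  intro n hn hdvd
  obtain ⟨mz, hmz⟩ := hdvd
  have hmz1 : 1 ≤ mz := by
    rcases Int.lt_or_le 0 mz with h | h
    · omega
    · exfalso
      have : (Q:ℤ) * mz ≤ 0 := mul_nonpos_of_nonneg_of_nonpos (by positivity) h
      omega
  set k := padicValInt p (n + d) with hk
  have hnd0 : n + (d:ℤ) ≠ 0 := by omega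
  obtain ⟨h1, h2⟩ := pv_spec hp hnd0
  obtain ⟨hm1, hm2⟩ := coprime_factor hp hpQ hmz h1 h2
  obtain ⟨m, rfl⟩ : ∃ m:ℕ, mz = (m:ℤ) := ⟨mz.toNat, by omega⟩
  have hm : 1 ≤ m := by omega
  -- Tz n = L (ai^d * al^(Q*m))
  have hrep : Tz n = L (ai ^ d * al ^ (Q*m)) := by
    unfold Tz
    have hne : n = ((Q*m : ℕ) : ℤ) + (-(d:ℤ)) := by push_cast; omega
    rw [hne, zpow_add, zpow_neg, ← inv_zpow, zpow_natCast, zpow_natCast, Units.val_mul,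
        Units.val_pow_eq_pow_val, Units.val_pow_eq_pow_val, uu_val, uu_inv_val, mul_comm]
  obtain ⟨ν, hν⟩ := hc1
  have halQ : al ^ Q = 1 + ((p:ℕ):R3) * ν := by linear_combination hν
  obtain ⟨E, hE⟩ := EXP hp hp5 (ai^d) ν m k hm (natdvd_of_int hm1)
  rw [pcast] at halQ
  have hrep2 : Tz n = (m:ℤ)*(p:ℤ)*(L (ai^d * ν)) + (p:ℤ)^(k+2) * L E := by
    rw [hrep, pow_mul, halQ]
    have := hE
    rw [pcast, ncast_eq] at this
    rw [this, L_add, L_add, hLd]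
    have e1 : ((m:ℤ):R3) * (((p:ℕ):ℤ):R3) * (ai^d*ν) = (((m:ℤ)*((p:ℕ):ℤ) : ℤ):R3) * (ai^d*ν) := by
      push_cast; ring
    have e2 : ((((p:ℕ):ℤ):R3))^(k+2) * E = (((((p:ℕ):ℤ))^(k+2) : ℤ):R3) * E := by
      push_cast; ring
    rw [e1, e2, L_scal, L_scal]
    ring
  have hw : ¬ (p:ℤ) ∣ L (ai^d * ν) := by
    intro hdw
    apply hc2
    have : ai ^ d * (al ^ Q - 1) = (((p:ℕ):ℤ):R3) * (ai^d * ν) := by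
      rw [hν, pcast]; ring
    rw [this, L_scal]
    obtain ⟨w2, hw2⟩ := hdw
    exact ⟨w2, by rw [hw2]; ring⟩
  exact assemble hp hrep2 hm1 hm2 hw

end R3
namespace R3

theorem classB {p Q e : ℕ} {x₁ s : ℤ} (hp : p.Prime) (hp5 : 5 ≤ p) (hQpos : 0 < Q)
    (hpQ : ¬ (p:ℤ) ∣ (Q:ℤ))
    (h3e : (e:ℤ)*3 = s + 1)
    (hx : (p:ℤ)^2 ∣ 2*x₁^3 - 1)
    (hc1 : ((p:ℕ):R3) ∣ (((x₁:ℤ):R3) * (al^2 - al)) ^ Q - 1)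
    (hc2 : ¬ ((p:ℤ)^2 ∣ L (ai^e * (((x₁:ℤ):R3) * (al^2 - al)) * ((((x₁:ℤ):R3) * (al^2 - al))^Q - 1))))
    (hLz : L (ai^e * (al^2 - al)) = 0) :
    ∀ n : ℤ, 1 ≤ n → 0 < 3*n + s → (Q:ℤ) ∣ (3*n + s) →
      padicValInt p (Tz n) = padicValInt p (3*n + s) + 1 := by
  intro n hn hpos hdvd
  obtain ⟨mz, hmz⟩ := hdvd
  have hmz1 : 1 ≤ mz := by
    rcases Int.lt_or_le 0 mz with h | h
    · omega
    · exfalso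
      have : (Q:ℤ) * mz ≤ 0 := mul_nonpos_of_nonneg_of_nonpos (by positivity) h
      omega
  obtain ⟨m, rfl⟩ : ∃ m:ℕ, mz = (m:ℤ) := ⟨mz.toNat, by omega⟩
  have hm : 1 ≤ m := by omega
  set k := padicValInt p (3*n+s) with hk
  have hnd0 : 3*n + s ≠ 0 := by omega
  obtain ⟨h1, h2⟩ := pv_spec hp hnd0
  obtain ⟨hm1, hm2⟩ := coprime_factor hp hpQ hmz h1 h2
  obtain ⟨x, hx1, hx2⟩ := hensel hp hp5 hx (k+2) (by omega)
  set X : R3 := ((x:ℤ):R3) * (al^2 - al) with hX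
  set X₁ : R3 := ((x₁:ℤ):R3) * (al^2 - al) with hX₁
  have hcube : X^3 = ((2*x^3 : ℤ):R3) * al := by
    calc X^3 = ((x:ℤ):R3)^3 * (al^2-al)^3 := by rw [hX]; ring
    _ = ((x:ℤ):R3)^3 * (((2:ℤ):R3)*al) := by rw [cube_id]
    _ = ((2*x^3:ℤ):R3)*al := by push_cast; ring
  obtain ⟨nn, hnn⟩ : ∃ nn:ℕ, n + (e:ℤ) = (nn:ℤ) := ⟨(n+(e:ℤ)).toNat, by omega⟩
  have h3nn : 3*nn = Q*m + 1 := by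
    have hint : 3*(n+(e:ℤ)) = (Q:ℤ)*m + 1 := by omega
    rw [hnn] at hint
    exact_mod_cast hint
  have hrep : Tz n = L (ai^e * al^nn) := by
    unfold Tz
    have hne : n = ((nn:ℕ):ℤ) + (-(e:ℤ)) := by omega
    rw [hne, zpow_add, zpow_neg, ← inv_zpow, zpow_natCast, zpow_natCast, Units.val_mul,
        Units.val_pow_eq_pow_val, Units.val_pow_eq_pow_val, uu_val, uu_inv_val, mul_comm]
  -- scalar congruence
  have hpow1 : (p:ℤ)^(k+2) ∣ (2*x^3)^nn - 1 := by
    have hsd := sub_dvd_pow_sub_pow (2*x^3) 1 nn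
    rw [one_pow] at hsd
    exact dvd_trans hx1 hsd
  obtain ⟨c₂, hc₂⟩ := hpow1
  -- X^Q = 1 + p ν
  have hsubXX : ∃ D : R3, X - X₁ = (((p:ℤ)^2 : ℤ):R3) * D := by
    obtain ⟨dq, hdq⟩ := hx2
    refine ⟨((dq:ℤ):R3) * (al^2-al), ?_⟩
    have hcast : ((x:ℤ):R3) - ((x₁:ℤ):R3) = (((p:ℤ)^2:ℤ):R3) * ((dq:ℤ):R3) := by
      rw [show ((x:ℤ):R3) - ((x₁:ℤ):R3) = ((x - x₁ : ℤ):R3) by push_cast; ring, hdq]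
      push_cast; ring
    rw [hX, hX₁]
    linear_combination (al^2 - al) * hcast
  obtain ⟨D, hD⟩ := hsubXX
  have hsubQ : ∃ D2 : R3, X^Q - X₁^Q = (((p:ℤ)^2 : ℤ):R3) * D2 := by
    obtain ⟨F, hF⟩ := sub_dvd_pow_sub_pow X X₁ Q
    exact ⟨D * F, by rw [hF, hD]; ring⟩
  obtain ⟨D2, hD2⟩ := hsubQ
  have hXsub : ((p:ℕ):R3) ∣ (X^Q - 1) := by
    have h1' : ((p:ℕ):R3) ∣ (X^Q - X₁^Q) := by
      refine ⟨((p:ℤ):R3) * D2, ?_⟩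
      rw [hD2, pcast]; push_cast; ring
    have h2' : ((p:ℕ):R3) ∣ (X₁^Q - 1) := hc1
    have : X^Q - 1 = (X^Q - X₁^Q) + (X₁^Q - 1) := by ring
    rw [this]
    exact dvd_add h1' h2'
  obtain ⟨ν, hν⟩ := hXsub
  have hXQ : X^Q = 1 + ((p:ℕ):R3) * ν := by linear_combination hν
  obtain ⟨E, hE⟩ := EXP hp hp5 (ai^e * X) ν m k hm (natdvd_of_int hm1)
  -- main equation
  set y : R3 := ai^e * al^nn with hy
  set g : R3 := ai^e * X with hg
  have hEq : (((2*x^3)^nn : ℤ):R3) * y = g + ((m:ℕ):R3)*((p:ℕ):R3)*(g*ν) + ((p:ℕ):R3)^(k+2)*E := by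
    have hXpow : X^(3*nn) = (((2*x^3)^nn : ℤ):R3) * al^nn := by
      rw [pow_mul, hcube, mul_pow]
      push_cast
      ring
    have hXpow2 : X^(3*nn) = X * (X^Q)^m := by
      rw [h3nn, pow_succ, ← pow_mul, mul_comm (X^(Q*m)) X]
    calc (((2*x^3)^nn : ℤ):R3) * y = ai^e * (X^(3*nn)) := by rw [hXpow, hy]; ring
    _ = ai^e * (X * (X^Q)^m) := by rw [hXpow2]
    _ = (ai^e * X) * (1 + ((p:ℕ):R3)*ν)^m := by rw [hXQ]; ring
    _ = _ := hE
  have hLg : L g = 0 := by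
    have : g = ((x:ℤ):R3) * (ai^e * (al^2 - al)) := by rw [hg, hX]; ring
    rw [this, L_scal, hLz, mul_zero]
  set w : ℤ := L (g * ν) with hw
  have hbig : ((2*x^3)^nn) * L y = (m:ℤ)*(p:ℤ)*w + (p:ℤ)^(k+2) * L E := by
    have := congrArg L hEq
    rw [L_scal] at this
    rw [this, L_add, L_add, hLg]
    have e1 : ((m:ℕ):R3) * ((p:ℕ):R3) * (g*ν) = (((m:ℤ)*(p:ℤ) : ℤ):R3) * (g*ν) := by
      push_cast; ring
    have e2 : ((p:ℕ):R3)^(k+2) * E = ((((p:ℤ))^(k+2) : ℤ):R3) * E := by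
      push_cast; ring
    rw [e1, e2, L_scal, L_scal]
    ring
  have hTz : Tz n = (m:ℤ)*(p:ℤ)*w + (p:ℤ)^(k+2) * (L E - c₂ * L y) := by
    rw [hrep]
    linear_combination hbig - (L y) * hc₂
  -- nondegeneracy
  have hwnd : ¬ (p:ℤ) ∣ w := by
    intro hdw
    apply hc2
    have hgx : g * (X^Q - 1) = ((p:ℤ):R3) * (g * ν) := by
      rw [hν, pcast]; ring
    have hLgx : L (g * (X^Q - 1)) = (p:ℤ) * w := by rw [hgx, L_scal, hw]
    have hdiff : g * (X^Q - 1) - ai^e * X₁ * (X₁^Q - 1)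
        = (((p:ℤ)^2 : ℤ):R3) * (ai^e * (D * (X^Q - 1) + X₁ * D2)) := by
      have expand : g * (X^Q - 1) - ai^e * X₁ * (X₁^Q - 1)
          = ai^e * ((X - X₁) * (X^Q - 1) + X₁ * (X^Q - X₁^Q)) := by rw [hg]; ring
      rw [expand, hD, hD2]; ring
    have hdL : (p:ℤ)^2 ∣ L (g * (X^Q - 1)) - L (ai^e * X₁ * (X₁^Q - 1)) := by
      rw [← L_sub, hdiff, L_scal]
      exact ⟨_, rfl⟩
    have hpw : (p:ℤ)^2 ∣ (p:ℤ) * w := by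
      obtain ⟨w2, hw2⟩ := hdw
      exact ⟨w2, by rw [hw2]; ring⟩
    have : (p:ℤ)^2 ∣ L (ai^e * X₁ * (X₁^Q - 1)) := by
      have := dvd_sub (hLgx ▸ hpw) hdL
      simpa using this
    exact this
  exact assemble hp hTz hm1 hm2 hwnd

end R3
namespace R3

theorem classC {p Q : ℕ} (hp : p.Prime) (hQpos : 0 < Q) (hQ16 : Q < 65536)
    (hcong : ((p:ℕ):R3) ∣ (al^Q - 1))
    (hcomp : ∀ r : ℕ, r < Q → ((Q:ℤ) ∣ ((r:ℤ) - 0)) ∨ ((Q:ℤ) ∣ ((r:ℤ) + 1)) ∨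
      ((Q:ℤ) ∣ ((r:ℤ) + 4)) ∨ ((Q:ℤ) ∣ ((r:ℤ) + 17)) ∨
      ((Q:ℤ) ∣ (3*(r:ℤ) - 1)) ∨ ((Q:ℤ) ∣ (3*(r:ℤ) + 5)) ∨
      ¬ ((p:ℤ) ∣ L (bpow 16 al r))) :
    ∀ n : ℤ, 1 ≤ n →
      (∀ c : ℤ, c ∈ ({0, -1, -4, -17} : Set ℤ) → ¬ (Q : ℤ) ∣ (n - c)) →
      ¬ (Q : ℤ) ∣ (3 * n - 1) → ¬ (Q : ℤ) ∣ (3 * n + 5) →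
      padicValInt p (Tz n) = 0 := by
  intro n hn hC h5 h6
  have h1 := hC 0 (by simp)
  have h2 := hC (-1) (by simp)
  have h3 := hC (-4) (by simp)
  have h4 := hC (-17) (by simp)
  have hQ0 : (Q:ℤ) ≠ 0 := by exact_mod_cast hQpos.ne'
  have hQposZ : (0:ℤ) < Q := by exact_mod_cast hQpos
  set r : ℤ := n % (Q:ℤ) with hr
  set q : ℤ := n / (Q:ℤ) with hq
  have hnr : n = (Q:ℤ)*q + r := by rw [hr, hq]; exact (Int.mul_ediv_add_emod n (Q:ℤ)).symm
  have hr0 : 0 ≤ r := Int.emod_nonneg n hQ0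
  have hrQ : r < (Q:ℤ) := Int.emod_lt_of_pos n hQposZ
  have hq0 : 0 ≤ q := Int.ediv_nonneg (by omega) (by omega)
  obtain ⟨rn, hrn⟩ : ∃ rn:ℕ, r = (rn:ℤ) := ⟨r.toNat, by omega⟩
  obtain ⟨qn, hqn⟩ : ∃ qn:ℕ, q = (qn:ℤ) := ⟨q.toNat, by omega⟩
  have hnr' : n = (Q:ℤ)*(qn:ℤ) + (rn:ℤ) := by rw [← hqn, ← hrn]; exact hnr
  have hTz : Tz n = L (al^(Q*qn) * al^rn) := by
    unfold Tz
    rw [show n = ((Q*qn + rn : ℕ):ℤ) by push_cast; exact hnr', uu_pow_nat, pow_add]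
  have hdvd1 : ((p:ℕ):R3) ∣ (al^(Q*qn) - 1) := by
    have hsd := sub_dvd_pow_sub_pow (al^Q) 1 qn
    rw [one_pow, ← pow_mul] at hsd
    exact dvd_trans hcong hsd
  have hdiff : (p:ℤ) ∣ (Tz n - L (al^rn)) := by
    have hexp : Tz n - L (al^rn) = L ((al^(Q*qn) - 1) * al^rn) := by
      rw [show (al^(Q*qn) - 1) * al^rn = al^(Q*qn) * al^rn - al^rn by ring, L_sub, hTz]
    rw [hexp]
    apply dvd_L (t := (p:ℤ))
    rw [← pcast]
    exact dvd_mul_of_dvd_left hdvd1 _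
  have hnotp : ¬ (p:ℤ) ∣ L (al^rn) := by
    have hb : bpow 16 al rn = al^rn := bpow_eq _ _ _ (by omega)
    rcases hcomp rn (by omega) with hd|hd|hd|hd|hd|hd|hd
    · exact absurd (show (Q:ℤ) ∣ n - 0 by rw [show n - 0 = (Q:ℤ)*(qn:ℤ) + ((rn:ℤ) - 0) by rw [hnr']; ring]; exact dvd_add ⟨(qn:ℤ), rfl⟩ hd) h1
    · exact absurd (show (Q:ℤ) ∣ n - (-1) by rw [show n - (-1) = (Q:ℤ)*(qn:ℤ) + ((rn:ℤ) + 1) by rw [hnr']; ring]; exact dvd_add ⟨(qn:ℤ), rfl⟩ hd) h2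
    · exact absurd (show (Q:ℤ) ∣ n - (-4) by rw [show n - (-4) = (Q:ℤ)*(qn:ℤ) + ((rn:ℤ) + 4) by rw [hnr']; ring]; exact dvd_add ⟨(qn:ℤ), rfl⟩ hd) h3
    · exact absurd (show (Q:ℤ) ∣ n - (-17) by rw [show n - (-17) = (Q:ℤ)*(qn:ℤ) + ((rn:ℤ) + 17) by rw [hnr']; ring]; exact dvd_add ⟨(qn:ℤ), rfl⟩ hd) h4
    · exact absurd (show (Q:ℤ) ∣ 3*n - 1 by rw [show 3*n - 1 = (Q:ℤ)*(3*(qn:ℤ)) + (3*(rn:ℤ) - 1) by rw [hnr']; ring]; exact dvd_add ⟨3*(qn:ℤ), rfl⟩ hd) h5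
    · exact absurd (show (Q:ℤ) ∣ 3*n + 5 by rw [show 3*n + 5 = (Q:ℤ)*(3*(qn:ℤ)) + (3*(rn:ℤ) + 5) by rw [hnr']; ring]; exact dvd_add ⟨3*(qn:ℤ), rfl⟩ hd) h6
    · rw [← hb]; exact hd
  apply pv_eq hp
  · rw [pow_zero]; exact one_dvd _
  · rw [pow_one]
    intro hd
    apply hnotp
    have : L (al^rn) = Tz n - (Tz n - L (al^rn)) := by ring
    rw [this]
    exact dvd_sub hd hdiff

theorem certA1_of {p Q : ℕ} (hQ : Q < 65536)
    (h : (p:ℤ) ∣ (bpow 16 al Q - 1).a ∧ (p:ℤ) ∣ (bpow 16 al Q - 1).b ∧ (p:ℤ) ∣ (bpow 16 al Q - 1).c) :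
    ((p:ℕ):R3) ∣ (al^Q - 1) := by
  rw [pcast, ← bpow_eq 16 al Q hQ]
  exact (cdvd_iff _ _).mpr h

theorem certA2_of {p Q d : ℕ} (hQ : Q < 65536)
    (h : ¬ ((p:ℤ)^2 ∣ L (ai^d * (bpow 16 al Q - 1)))) :
    ¬ ((p:ℤ)^2 ∣ L (ai^d * (al^Q - 1))) := by
  rwa [bpow_eq 16 al Q hQ] at h

theorem certB1_of {p Q : ℕ} {x₁ : ℤ} (hQ : Q < 65536)
    (h : (p:ℤ) ∣ (bpow 16 (((x₁:ℤ):R3)*(al^2-al)) Q - 1).a ∧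
         (p:ℤ) ∣ (bpow 16 (((x₁:ℤ):R3)*(al^2-al)) Q - 1).b ∧
         (p:ℤ) ∣ (bpow 16 (((x₁:ℤ):R3)*(al^2-al)) Q - 1).c) :
    ((p:ℕ):R3) ∣ ((((x₁:ℤ):R3)*(al^2-al))^Q - 1) := by
  rw [pcast, ← bpow_eq 16 (((x₁:ℤ):R3)*(al^2-al)) Q hQ]
  exact (cdvd_iff _ _).mpr h

theorem certB2_of {p Q e : ℕ} {x₁ : ℤ} (hQ : Q < 65536)
    (h : ¬ ((p:ℤ)^2 ∣ L (ai^e * (((x₁:ℤ):R3)*(al^2-al)) * (bpow 16 (((x₁:ℤ):R3)*(al^2-al)) Q - 1)))) :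
    ¬ ((p:ℤ)^2 ∣ L (ai^e * (((x₁:ℤ):R3)*(al^2-al)) * ((((x₁:ℤ):R3)*(al^2-al))^Q - 1))) := by
  rwa [bpow_eq 16 (((x₁:ℤ):R3)*(al^2-al)) Q hQ] at h

theorem caseLemma (T : ℤ → ℤ)
    (hT0 : T 0 = 0) (hT1 : T 1 = 1) (hT2 : T 2 = 1)
    (hTrec : ∀ n : ℤ, T (n + 3) = T (n + 2) + T (n + 1) + T n)
    (p Q : ℕ) (x₁ : ℤ)
    (hp : p.Prime) (hp5 : 5 ≤ p) (hQpos : 0 < Q) (hQ16 : Q < 65536) (hpQ : ¬ (p:ℤ) ∣ (Q:ℤ))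
    (certA1 : ((p:ℕ):R3) ∣ (al^Q - 1))
    (certA2_0 : ¬ ((p:ℤ)^2 ∣ L (ai^0 * (al^Q - 1))))
    (certA2_1 : ¬ ((p:ℤ)^2 ∣ L (ai^1 * (al^Q - 1))))
    (certA2_4 : ¬ ((p:ℤ)^2 ∣ L (ai^4 * (al^Q - 1))))
    (certA2_17 : ¬ ((p:ℤ)^2 ∣ L (ai^17 * (al^Q - 1))))
    (certB0 : (p:ℤ)^2 ∣ 2*x₁^3 - 1)
    (certB1 : ((p:ℕ):R3) ∣ ((((x₁:ℤ):R3)*(al^2-al))^Q - 1))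
    (certB2 : ¬ ((p:ℤ)^2 ∣ L (ai^0 * (((x₁:ℤ):R3)*(al^2-al)) * ((((x₁:ℤ):R3)*(al^2-al))^Q - 1))))
    (certB3 : ¬ ((p:ℤ)^2 ∣ L (ai^2 * (((x₁:ℤ):R3)*(al^2-al)) * ((((x₁:ℤ):R3)*(al^2-al))^Q - 1))))
    (certC : ∀ r : ℕ, r < Q → ((Q:ℤ) ∣ ((r:ℤ) - 0)) ∨ ((Q:ℤ) ∣ ((r:ℤ) + 1)) ∨
      ((Q:ℤ) ∣ ((r:ℤ) + 4)) ∨ ((Q:ℤ) ∣ ((r:ℤ) + 17)) ∨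
      ((Q:ℤ) ∣ (3*(r:ℤ) - 1)) ∨ ((Q:ℤ) ∣ (3*(r:ℤ) + 5)) ∨
      ¬ ((p:ℤ) ∣ L (bpow 16 al r))) :
    ∀ n : ℤ, 1 ≤ n →
      (∀ c : ℤ, c ∈ ({0, -1, -4, -17} : Set ℤ) → (Q : ℤ) ∣ (n - c) →
        padicValInt p (T n) = padicValInt p (n - c) + 1) ∧
      ((Q : ℤ) ∣ (3 * n - 1) →
        padicValInt p (T n) = padicValInt p (3 * n - 1) + 1) ∧
      ((Q : ℤ) ∣ (3 * n + 5) →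
        padicValInt p (T n) = padicValInt p (3 * n + 5) + 1) ∧
      ((∀ c : ℤ, c ∈ ({0, -1, -4, -17} : Set ℤ) → ¬ (Q : ℤ) ∣ (n - c)) →
        ¬ (Q : ℤ) ∣ (3 * n - 1) → ¬ (Q : ℤ) ∣ (3 * n + 5) →
        padicValInt p (T n) = 0) := by
  intro n hn
  have hTT : T n = Tz n := T_eq_Tz T hT0 hT1 hT2 hTrec n
  refine ⟨?_, ?_, ?_, ?_⟩
  · intro c hc hdvd
    simp only [Set.mem_insert_iff, Set.mem_singleton_iff] at hc
    rcases hc with rfl | rfl | rfl | rfl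
    · have hd' : (Q:ℤ) ∣ (n + ((0:ℕ):ℤ)) := by rw [show n + ((0:ℕ):ℤ) = n - (0) from by push_cast; ring]; exact hdvd
      have hres := classA (d := 0) hp hp5 hQpos hpQ (by decide) certA1 certA2_0 n hn hd'
      rw [hTT, show n - (0:ℤ) = n + ((0:ℕ):ℤ) by push_cast; ring]
      exact hres
    · have hd' : (Q:ℤ) ∣ (n + ((1:ℕ):ℤ)) := by rw [show n + ((1:ℕ):ℤ) = n - (-1) from by push_cast; ring]; exact hdvd
      have hres := classA (d := 1) hp hp5 hQpos hpQ (by decide) certA1 certA2_1 n hn hd'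
      rw [hTT, show n - (-1:ℤ) = n + ((1:ℕ):ℤ) by push_cast; ring]
      exact hres
    · have hd' : (Q:ℤ) ∣ (n + ((4:ℕ):ℤ)) := by rw [show n + ((4:ℕ):ℤ) = n - (-4) from by push_cast; ring]; exact hdvd
      have hres := classA (d := 4) hp hp5 hQpos hpQ (by decide) certA1 certA2_4 n hn hd'
      rw [hTT, show n - (-4:ℤ) = n + ((4:ℕ):ℤ) by push_cast; ring]
      exact hres
    · have hd' : (Q:ℤ) ∣ (n + ((17:ℕ):ℤ)) := by rw [show n + ((17:ℕ):ℤ) = n - (-17) from by push_cast; ring]; exact hdvd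
      have hres := classA (d := 17) hp hp5 hQpos hpQ (by decide) certA1 certA2_17 n hn hd'
      rw [hTT, show n - (-17:ℤ) = n + ((17:ℕ):ℤ) by push_cast; ring]
      exact hres
  · intro hdvd
    have hd' : (Q:ℤ) ∣ (3*n + (-1)) := by rw [show 3*n + (-1:ℤ) = 3*n - 1 from by ring]; exact hdvd
    have hres := classB (e := 0) (s := -1) hp hp5 hQpos hpQ (by norm_num)
      certB0 certB1 certB2 (by decide) n hn (by omega) hd'
    rw [hTT, show 3*n - 1 = 3*n + (-1:ℤ) by ring]
    exact hres
  · intro hdvd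
    have hd' : (Q:ℤ) ∣ (3*n + 5) := hdvd
    have hres := classB (e := 2) (s := 5) hp hp5 hQpos hpQ (by norm_num)
      certB0 certB1 certB3 (by decide) n hn (by omega) hd'
    rw [hTT]
    exact hres
  · intro hC h5 h6
    rw [hTT]
    exact classC hp hQpos hQ16 certA1 certC n hn hC h5 h6

end R3
set_option maxRecDepth 100000 in
/-- For `(p, Q) ∈ {(269,268), (401,400), (419,418), (499,166), (587,293)}` and every
integer `n ≥ 1`: if `n ≡ c (mod Q)` for `c ∈ {0, −1, −4, −17}` then
`ν_p(T(n)) = ν_p(n − c) + 1`; if `3n ≡ 1 (mod Q)` then `ν_p(T(n)) = ν_p(3n − 1) + 1`;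
if `3n ≡ −5 (mod Q)` then `ν_p(T(n)) = ν_p(3n + 5) + 1`; otherwise `ν_p(T(n)) = 0`. -/
theorem marquesLengyelRat_holds_five_primes
    (T : ℤ → ℤ)
    (hT0 : T 0 = 0) (hT1 : T 1 = 1) (hT2 : T 2 = 1)
    (hTrec : ∀ n : ℤ, T (n + 3) = T (n + 2) + T (n + 1) + T n)
    (p Q : ℕ)
    (hpQ : (p = 269 ∧ Q = 268) ∨ (p = 401 ∧ Q = 400) ∨ (p = 419 ∧ Q = 418) ∨
           (p = 499 ∧ Q = 166) ∨ (p = 587 ∧ Q = 293)) :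
    ∀ n : ℤ, 1 ≤ n →
      (∀ c : ℤ, c ∈ ({0, -1, -4, -17} : Set ℤ) → (Q : ℤ) ∣ (n - c) →
        padicValInt p (T n) = padicValInt p (n - c) + 1) ∧
      ((Q : ℤ) ∣ (3 * n - 1) →
        padicValInt p (T n) = padicValInt p (3 * n - 1) + 1) ∧
      ((Q : ℤ) ∣ (3 * n + 5) →
        padicValInt p (T n) = padicValInt p (3 * n + 5) + 1) ∧
      ((∀ c : ℤ, c ∈ ({0, -1, -4, -17} : Set ℤ) → ¬ (Q : ℤ) ∣ (n - c)) →
        ¬ (Q : ℤ) ∣ (3 * n - 1) → ¬ (Q : ℤ) ∣ (3 * n + 5) →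
        padicValInt p (T n) = 0) := by
  rcases hpQ with ⟨rfl, rfl⟩ | ⟨rfl, rfl⟩ | ⟨rfl, rfl⟩ | ⟨rfl, rfl⟩ | ⟨rfl, rfl⟩
  · exact R3.caseLemma T hT0 hT1 hT2 hTrec 269 268 57816 (by norm_num) (by norm_num) (by norm_num) (by norm_num) (by decide)
      (R3.certA1_of (by norm_num) (by decide))
      (R3.certA2_of (by norm_num) (by decide))
      (R3.certA2_of (by norm_num) (by decide))
      (R3.certA2_of (by norm_num) (by decide))
      (R3.certA2_of (by norm_num) (by decide))
      (by decide)
      (R3.certB1_of (by norm_num) (by decide))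
      (R3.certB2_of (by norm_num) (by decide))
      (R3.certB2_of (by norm_num) (by decide))
      (by decide)
  · exact R3.caseLemma T hT0 hT1 hT2 hTrec 401 400 123800 (by norm_num) (by norm_num) (by norm_num) (by norm_num) (by decide)
      (R3.certA1_of (by norm_num) (by decide))
      (R3.certA2_of (by norm_num) (by decide))
      (R3.certA2_of (by norm_num) (by decide))
      (R3.certA2_of (by norm_num) (by decide))
      (R3.certA2_of (by norm_num) (by decide))
      (by decide)
      (R3.certB1_of (by norm_num) (by decide))
      (R3.certB2_of (by norm_num) (by decide))
      (R3.certB2_of (by norm_num) (by decide))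
      (by decide)
  · exact R3.caseLemma T hT0 hT1 hT2 hTrec 419 418 104659 (by norm_num) (by norm_num) (by norm_num) (by norm_num) (by decide)
      (R3.certA1_of (by norm_num) (by decide))
      (R3.certA2_of (by norm_num) (by decide))
      (R3.certA2_of (by norm_num) (by decide))
      (R3.certA2_of (by norm_num) (by decide))
      (R3.certA2_of (by norm_num) (by decide))
      (by decide)
      (R3.certB1_of (by norm_num) (by decide))
      (R3.certB2_of (by norm_num) (by decide))
      (R3.certB2_of (by norm_num) (by decide))
      (by decide)
  · exact R3.caseLemma T hT0 hT1 hT2 hTrec 499 166 66417 (by norm_num) (by norm_num) (by norm_num) (by norm_num) (by decide)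
      (R3.certA1_of (by norm_num) (by decide))
      (R3.certA2_of (by norm_num) (by decide))
      (R3.certA2_of (by norm_num) (by decide))
      (R3.certA2_of (by norm_num) (by decide))
      (R3.certA2_of (by norm_num) (by decide))
      (by decide)
      (R3.certB1_of (by norm_num) (by decide))
      (R3.certB2_of (by norm_num) (by decide))
      (R3.certB2_of (by norm_num) (by decide))
      (by decide)
  · exact R3.caseLemma T hT0 hT1 hT2 hTrec 587 293 260491 (by norm_num) (by norm_num) (by norm_num) (by norm_num) (by decide)
      (R3.certA1_of (by norm_num) (by decide))
      (R3.certA2_of (by norm_num) (by decide))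
      (R3.certA2_of (by norm_num) (by decide))
      (R3.certA2_of (by norm_num) (by decide))
      (R3.certA2_of (by norm_num) (by decide))
      (by decide)
      (R3.certB1_of (by norm_num) (by decide))
      (R3.certB2_of (by norm_num) (by decide))
      (R3.certB2_of (by norm_num) (by decide))
      (by decide)
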